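/- arXiv:2310.12983 — 8 statements merged into one kernel-verified Lean document; each statement's English description precedes it below -/
import Mathlib

section
/- Let m ≥ 4. Any social choice function for m candidates satisfying neutrality (N) also satisfies the duel property (DP). -/
/-- A voting profile for `m` candidates: a finite list of ballots, where a ballot
is `none` (abstention) or `some k` (a vote for candidate `k : Fin m`). -/
abbrev Profile (m : ℕ) := List (Option (Fin m))

/-- `votes P k` is the number of ballots in `P` for candidate `k` (Σ_k(P)). -/
def votes {m : ℕ} (P : Profile m) (k : Fin m) : ℕ := P.count (some k)

/-- Anonymity (A): the outcome is invariant under permutations of the voters. -/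
def Anonymous {m : ℕ} (f : Profile m → Option (Fin m)) : Prop :=
  ∀ P P' : Profile m, P.Perm P' → f P = f P'

/-- Neutrality (N): relabelling the candidates by a permutation relabels the outcome. -/
def Neutral {m : ℕ} (f : Profile m → Option (Fin m)) : Prop :=
  ∀ (τ : Equiv.Perm (Fin m)) (P : Profile m),
    f (P.map (Option.map τ)) = Option.map τ (f P)

/-- Duel property (DP): if every ballot is an abstention or a vote for `i` or `j`,
then the outcome is a tie or a win of `i` or `j`. -/
def DuelProperty {m : ℕ} (f : Profile m → Option (Fin m)) : Prop :=
  ∀ (i j : Fin m) (P : Profile m),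
    (∀ b ∈ P, b = none ∨ b = some i ∨ b = some j) →
    (f P = none ∨ f P = some i ∨ f P = some j)

/-- Pareto optimality (PO): if candidate `k` receives at least one vote and all other
candidates receive none, then `k` wins. -/
def ParetoOptimal {m : ℕ} (f : Profile m → Option (Fin m)) : Prop :=
  ∀ (P : Profile m) (k : Fin m),
    0 < votes P k → (∀ l : Fin m, l ≠ k → votes P l = 0) → f P = some k

/-- Reducibility to subsocieties (RS): for every profile with at least 2 voters,
the outcome equals the outcome on the profile of outcomes of all subsocieties
obtained by removing one voter. -/
def Reducible {m : ℕ} (f : Profile m → Option (Fin m)) : Prop :=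
  ∀ P : Profile m, 2 ≤ P.length →
    f P = f (List.ofFn fun l : Fin P.length => f (P.eraseIdx (l : ℕ)))

/-- The majority rule: `some k*` if `k*` has strictly more votes than every other
candidate, and `none` (a tie) otherwise. -/
noncomputable def Maj {m : ℕ} (P : Profile m) : Option (Fin m) :=
  if h : ∃ k : Fin m, ∀ l : Fin m, l ≠ k → votes P l < votes P k
  then some h.choose else none

/-- For `m ≥ 4`, any social choice function satisfying neutrality (N)
also satisfies the duel property (DP). -/
theorem stmt_0 (m : ℕ) (hm : 4 ≤ m) (f : Profile m → Option (Fin m))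
    (hN : Neutral f) : DuelProperty f := by
  intro i j P hP
  by_contra h
  push_neg at h
  obtain ⟨h1, h2, h3⟩ := h
  obtain ⟨k, hk⟩ : ∃ k, f P = some k := by
    cases hfP : f P with
    | none => exact absurd hfP h1
    | some k => exact ⟨k, rfl⟩
  have hki : k ≠ i := fun e => h2 (hk.trans (by rw [e]))
  have hkj : k ≠ j := fun e => h3 (hk.trans (by rw [e]))
  obtain ⟨l, hl⟩ : ∃ l : Fin m, l ∉ ({i, j, k} : Finset (Fin m)) := by
    have hcard : ({i, j, k} : Finset (Fin m)).card < Fintype.card (Fin m) := by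
      have : ({i, j, k} : Finset (Fin m)).card ≤ 3 := by
        apply le_trans (Finset.card_insert_le _ _)
        simp [Finset.card_insert_le]
        exact lt_of_le_of_lt (Finset.card_insert_le _ _) (by simp)
      simp only [Fintype.card_fin]
      omega
    by_contra hc
    push_neg at hc
    have : ({i, j, k} : Finset (Fin m)) = Finset.univ :=
      Finset.eq_univ_of_forall hc
    rw [this] at hcard
    simp at hcard
  simp only [Finset.mem_insert, Finset.mem_singleton, not_or] at hl
  obtain ⟨hli, hlj, hlk⟩ := hl
  set τ := Equiv.swap k l with hτ
  have hmap : P.map (Option.map τ) = P := by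
    have hb' : ∀ b ∈ P, Option.map τ b = id b := by
      intro b hb
      rcases hP b hb with rfl | rfl | rfl
      · rfl
      · simp [hτ, Equiv.swap_apply_of_ne_of_ne (Ne.symm hki) (Ne.symm hli)]
      · simp [hτ, Equiv.swap_apply_of_ne_of_ne (Ne.symm hkj) (Ne.symm hlj)]
    rw [List.map_congr_left hb', List.map_id]
  have := hN τ P
  rw [hmap, hk] at this
  simp [hτ, Equiv.swap_apply_left] at this
  exact hlk this.symm
end

section
/- Let f be a social choice function for m ≥ 2 candidates satisfying anonymity (A) and neutrality (N). If P is a voting profile in which two distinct candidates i and j receive the same number of votes, i.e., Σ_i(P) = Σ_j(P) with i ≠ j, then f(P) ≠ some i and f(P) ≠ some j. -/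
/-- Under (A) and (N), candidates that are tied cannot win. -/
theorem stmt_1 (m : ℕ) (hm : 2 ≤ m) (f : Profile m → Option (Fin m))
    (hA : Anonymous f) (hN : Neutral f)
    (P : Profile m) (i j : Fin m) (hij : i ≠ j)
    (htie : votes P i = votes P j) :
    f P ≠ some i ∧ f P ≠ some j := by
  set τ := Equiv.swap i j with hτ
  have hg : Function.Injective (Option.map (τ : Fin m → Fin m)) :=
    Option.map_injective τ.injective
  have hperm : (P.map (Option.map (τ : Fin m → Fin m))).Perm P := by
    rw [List.perm_iff_count]
    intro b
    rcases b with _ | k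
    · have : (none : Option (Fin m)) = Option.map (τ : Fin m → Fin m) none := rfl
      conv_lhs => rw [this]
      rw [List.count_map_of_injective _ _ hg none]
    · have hk : (some k : Option (Fin m)) =
          Option.map (τ : Fin m → Fin m) (some (τ.symm k)) := by simp
      conv_lhs => rw [hk]
      rw [List.count_map_of_injective _ _ hg (some (τ.symm k))]
      rcases eq_or_ne k i with rfl | hki
      · have : τ.symm k = j := by simp [hτ, Equiv.swap_apply_left]
        rw [this]; exact htie.symm
      rcases eq_or_ne k j with rfl | hkj
      · have : τ.symm k = i := by simp [hτ, Equiv.swap_apply_right]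
        rw [this]; exact htie
      · have : τ.symm k = k := by
          simp [hτ, Equiv.swap_apply_of_ne_of_ne hki hkj]
        rw [this]
  have key : Option.map (τ : Fin m → Fin m) (f P) = f P := by
    rw [← hN τ P, hA _ _ hperm]
  constructor
  · intro h
    rw [h] at key
    simp only [Option.map_some, Option.some.injEq] at key
    rw [hτ, Equiv.swap_apply_left] at key
    exact hij key.symm
  · intro h
    rw [h] at key
    simp only [Option.map_some, Option.some.injEq] at key
    rw [Equiv.swap_apply_right] at key
    exact hij key
end

section
/- For every m ≥ 2, the majority voting rule Maj, viewed as a social choice function for m candidates, satisfies anonymity (A), neutrality (N), the duel property (DP), Pareto optimality (PO) and reducibility to subsocieties (RS). -/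
lemma count_eraseIdx' {α : Type*} [DecidableEq α] (a : α) :
    ∀ (L : List α) (i : ℕ) (h : i < L.length),
      L.count a = (L.eraseIdx i).count a + if L[i] = a then 1 else 0 := by
  intro L
  induction L with
  | nil => intro i h; simp at h
  | cons b t ih =>
    intro i h
    cases i with
    | zero =>
      simp only [List.eraseIdx_zero, List.getElem_cons_zero, List.tail_cons, List.count_cons]
      split <;> simp_all
    | succ i =>
      have := ih i (by simpa using h)
      simp [List.count_cons, this]
      split <;> omega

lemma count_le_count' {α : Type*} [DecidableEq α] (a b : α) :
    ∀ (L₁ L₂ : List α), L₁.length = L₂.length →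
      (∀ (i : ℕ) (h₁ : i < L₁.length) (h₂ : i < L₂.length), L₁[i] = a → L₂[i] = b) →
      L₁.count a ≤ L₂.count b := by
  intro L₁
  induction L₁ with
  | nil => intro L₂ _ _; simp
  | cons x t ih =>
    intro L₂ hlen H
    cases L₂ with
    | nil => simp at hlen
    | cons y s =>
      have h0 : x = a → y = b := fun hx => H 0 (by simp) (by simp) hx
      have := ih s (by simpa using hlen)
        (fun i h₁ h₂ hi => H (i+1) (by simpa using h₁) (by simpa using h₂) hi)
      simp only [List.count_cons]
      split <;> split <;> simp_all <;> omega

lemma count_key {m : ℕ} (L : Profile m) (a : Option (Fin m)) :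
    L.count a = @List.count _ instBEqOfDecidableEq a L := by
  induction L with
  | nil => rfl
  | cons b t ih => simp [List.count_cons, ih]

lemma maj_eq_some_iff {m : ℕ} (P : Profile m) (k : Fin m) :
    Maj P = some k ↔ ∀ l : Fin m, l ≠ k → votes P l < votes P k := by
  unfold Maj
  split
  · rename_i h
    simp only [Option.some.injEq]
    constructor
    · rintro rfl; exact h.choose_spec
    · intro hk
      by_contra hne
      have h1 := h.choose_spec k (fun he => hne he.symm)
      have h2 := hk h.choose hne
      omega
  · rename_i h
    simp only [reduceCtorEq, false_iff]
    intro hk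
    exact h ⟨k, hk⟩

lemma maj_eq_none_iff {m : ℕ} (P : Profile m) :
    Maj P = none ↔ ¬ ∃ k : Fin m, ∀ l : Fin m, l ≠ k → votes P l < votes P k := by
  unfold Maj; split <;> simp_all

/-- For every `m ≥ 2`, the majority rule satisfies (A), (N), (DP),
(PO) and (RS). -/
theorem stmt_4 (m : ℕ) (hm : 2 ≤ m) :
    Anonymous (Maj (m := m)) ∧ Neutral (Maj (m := m)) ∧
    DuelProperty (Maj (m := m)) ∧ ParetoOptimal (Maj (m := m)) ∧
    Reducible (Maj (m := m)) := by
  refine ⟨?_, ?_, ?_, ?_, ?_⟩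
  · -- Anonymity
    intro P P' h
    have hc : ∀ a : Option (Fin m), P.count a = P'.count a := fun a => by
      exact h.count_eq a
    have hvv : votes P = votes P' := funext fun k => hc (some k)
    unfold Maj; rw [hvv]
  · -- Neutrality
    intro τ P
    have hv : ∀ k : Fin m, votes (P.map (Option.map τ)) (τ k) = votes P k := by
      intro k
      show (P.map (Option.map τ)).count (some (τ k)) = P.count (some k)
      exact List.count_map_of_injective P (Option.map τ)
        (Option.map_injective τ.injective) (some k)
    cases hmp : Maj P with
    | none =>
      simp only [Option.map_none]
      rw [maj_eq_none_iff] at hmp ⊢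
      rintro ⟨c, hc⟩
      apply hmp
      refine ⟨τ.symm c, fun e he => ?_⟩
      have h1 := hc (τ e) (fun hx => he (by rw [← hx, Equiv.symm_apply_apply]))
      rw [← hv e, ← hv (τ.symm c), Equiv.apply_symm_apply]
      exact h1
    | some k =>
      simp only [Option.map_some]
      rw [maj_eq_some_iff] at hmp ⊢
      intro e he
      have h1 := hmp (τ.symm e) (fun hx => he (by rw [← hx, Equiv.apply_symm_apply]))
      have h2 : e = τ (τ.symm e) := (Equiv.apply_symm_apply τ e).symm
      rw [h2, hv, hv]
      exact h1
  · -- Duel property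
    intro i j P hP
    rcases hmp : Maj P with _ | c
    · exact Or.inl rfl
    · right
      by_cases hci : c = i
      · exact Or.inl (by rw [hci])
      by_cases hcj : c = j
      · exact Or.inr (by rw [hcj])
      exfalso
      rw [maj_eq_some_iff] at hmp
      have hmem : some c ∉ P := by
        intro hmem
        rcases hP _ hmem with h | h | h
        · exact nomatch h
        · exact hci (Option.some_injective _ h)
        · exact hcj (Option.some_injective _ h)
      have h0 : votes P c = 0 := List.count_eq_zero.2 hmem
      have := hmp i (fun h => hci h.symm)
      omega
  · -- Pareto optimality
    intro P k h1 h2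
    rw [maj_eq_some_iff]
    intro l hl
    rw [h2 l hl]
    exact h1
  · -- Reducibility
    intro P hlen
    set Q : Profile m := List.ofFn fun l : Fin P.length => Maj (P.eraseIdx (l : ℕ)) with hQ
    have hQlen : Q.length = P.length := List.length_ofFn
    have hQget : ∀ (i : ℕ) (h : i < Q.length), Q[i] = Maj (P.eraseIdx i) := by
      intro i h
      simp only [hQ, List.getElem_ofFn]
    have hvE : ∀ (i : ℕ), i < P.length → ∀ c : Fin m,
        ∀ (h : i < P.length), votes P c = votes (P.eraseIdx i) c
          + if P[i] = some c then 1 else 0 := by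
      intro i _ c h
      show P.count (some c) = (P.eraseIdx i).count (some c) + _
      rw [count_key, count_key]
      exact count_eraseIdx' (some c) P i h
    have hle : ∀ (i : ℕ) (h : i < P.length) (c : Fin m),
        votes (P.eraseIdx i) c ≤ votes P c := by
      intro i h c
      have := hvE i h c h
      split at this <;> omega
    have hge : ∀ (i : ℕ) (h : i < P.length) (c : Fin m),
        votes P c ≤ votes (P.eraseIdx i) c + 1 := by
      intro i h c
      have := hvE i h c h
      split at this <;> omega
    have heq : ∀ (i : ℕ) (h : i < P.length) (c : Fin m), P[i] ≠ some c →
        votes (P.eraseIdx i) c = votes P c := by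
      intro i h c hne
      have := hvE i h c h
      rw [if_neg hne] at this
      omega
    have hsub : ∀ (i : ℕ) (h : i < P.length) (c : Fin m), P[i] = some c →
        votes (P.eraseIdx i) c + 1 = votes P c := by
      intro i h c hpi
      have := hvE i h c h
      rw [if_pos hpi] at this
      omega
    cases hmp : Maj P with
    | some k =>
      rw [maj_eq_some_iff] at hmp
      have hA : ∀ (i : ℕ) (h : i < P.length) (c : Fin m),
          Maj (P.eraseIdx i) = some c → c = k := by
        intro i h c hc
        by_contra hne
        rw [maj_eq_some_iff] at hc
        have h1 := hc k (fun he => hne he.symm)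
        have h2 := hmp c hne
        have h3 := hle i h c
        have h4 := hge i h k
        omega
      have hB : ∃ (i : ℕ) (h : i < P.length), Maj (P.eraseIdx i) = some k := by
        by_cases hall : ∀ (i : ℕ) (h : i < P.length), P[i] = some k
        · refine ⟨0, by omega, ?_⟩
          rw [maj_eq_some_iff]
          intro e he
          have hmem : some e ∉ P := by
            intro hmem
            obtain ⟨i, hi, hgi⟩ := List.getElem_of_mem hmem
            rw [hall i hi] at hgi
            exact he (Option.some_injective _ hgi).symm
          have h0 : votes P e = 0 := List.count_eq_zero.2 hmem
          have hkn : votes P k = P.length := by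
            apply List.count_eq_length.2
            intro b hb
            obtain ⟨i, hi, hgi⟩ := List.getElem_of_mem hb
            rw [hall i hi] at hgi
            exact hgi
          have e1 := hle 0 (by omega) e
          have e2 := hsub 0 (by omega) k (hall 0 (by omega))
          omega
        · push_neg at hall
          obtain ⟨i, hi, hne⟩ := hall
          refine ⟨i, hi, ?_⟩
          rw [maj_eq_some_iff]
          intro e he
          have e1 := hle i hi e
          have e2 := heq i hi k hne
          have := hmp e he
          omega
      have hQk : Maj Q = some k := by
        rw [maj_eq_some_iff]
        intro e he
        have hne : some e ∉ Q := by
          intro hmem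
          obtain ⟨i, hi, hgi⟩ := List.getElem_of_mem hmem
          rw [hQget i hi] at hgi
          exact he (hA i (by omega) e hgi)
        have h0 : votes Q e = 0 := List.count_eq_zero.2 hne
        have hpos : 0 < votes Q k := by
          obtain ⟨i, hi, hB'⟩ := hB
          have hi' : i < Q.length := by omega
          have hmem := List.getElem_mem hi'
          rw [hQget i hi', hB'] at hmem
          exact List.count_pos_iff.2 hmem
        omega
      rw [hQk]
    | none =>
      rw [maj_eq_none_iff] at hmp
      symm
      rw [maj_eq_none_iff]
      rintro ⟨c, hc⟩
      haveI : Nonempty (Fin m) := ⟨⟨0, by omega⟩⟩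
      obtain ⟨k₀, hk₀⟩ := Finite.exists_max (votes P)
      have h2nd : ∃ j, j ≠ k₀ ∧ votes P j = votes P k₀ := by
        by_contra hno
        push_neg at hno
        exact hmp ⟨k₀, fun l hl => lt_of_le_of_ne (hk₀ l) (hno l hl)⟩
      obtain ⟨j₀, hj₀ne, hj₀⟩ := h2nd
      have hexc : ∃ (i : ℕ) (h : i < P.length), Maj (P.eraseIdx i) = some c := by
        have hd : ∃ d : Fin m, d ≠ c := by
          by_cases h : c = k₀
          · exact ⟨j₀, by rw [h]; exact hj₀ne⟩
          · exact ⟨k₀, fun hx => h hx.symm⟩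
        obtain ⟨d, hd⟩ := hd
        have hlt := hc d hd
        have hpos : 0 < votes Q c := by omega
        have hmem : some c ∈ Q := List.count_pos_iff.1 hpos
        obtain ⟨i, hi, hgi⟩ := List.getElem_of_mem hmem
        exact ⟨i, by omega, (hQget i hi).symm.trans hgi⟩
      have hsubc : ∀ (i : ℕ) (h : i < P.length), Maj (P.eraseIdx i) = some c →
          ∀ d : Fin m, d ≠ c → votes P d = votes P k₀ → P[i] = some d := by
        intro i h hi d hdc hdM
        by_contra hne
        rw [maj_eq_some_iff] at hi
        have h1 := hi d hdc
        have h2 := heq i h d hne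
        have h3 := hle i h c
        have h4 := hk₀ c
        omega
      obtain ⟨i₁, hi₁, hMi₁⟩ := hexc
      have hcM : votes P c = votes P k₀ ∧ ∃ d, d ≠ c ∧ votes P d = votes P k₀ := by
        by_cases hck : c = k₀
        · subst hck
          exact ⟨rfl, j₀, hj₀ne, hj₀⟩
        · by_cases hcj : c = j₀
          · subst hcj
            exact ⟨hj₀, k₀, fun h => hck h.symm, rfl⟩
          · exfalso
            have e1 := hsubc i₁ hi₁ hMi₁ k₀ (fun h => hck h.symm) rfl
            have e2 := hsubc i₁ hi₁ hMi₁ j₀ (fun h => hcj h.symm) hj₀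
            rw [e1] at e2
            exact hj₀ne (Option.some_injective _ e2).symm
      obtain ⟨hcM, d, hdc, hdM⟩ := hcM
      have huniq : ∀ e : Fin m, e ≠ c → e ≠ d → votes P e < votes P k₀ := by
        intro e hec hed
        rcases lt_or_eq_of_le (hk₀ e) with h | h
        · exact h
        · exfalso
          have e1 := hsubc i₁ hi₁ hMi₁ e hec h
          have e2 := hsubc i₁ hi₁ hMi₁ d hdc hdM
          rw [e1] at e2
          exact hed (Option.some_injective _ e2)
      have hdP := hsubc i₁ hi₁ hMi₁ d hdc hdM
      have hM1 : 1 ≤ votes P k₀ := by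
        have hmem : some d ∈ P := hdP ▸ List.getElem_mem hi₁
        have := List.count_pos_iff.2 hmem
        have hvd : votes P d = P.count (some d) := rfl
        omega
      have hstep : ∀ (i : ℕ) (h : i < P.length), P[i] = some c →
          Maj (P.eraseIdx i) = some d := by
        intro i h hic
        rw [maj_eq_some_iff]
        intro e hed
        have hvd : votes (P.eraseIdx i) d = votes P k₀ := by
          rw [heq i h d (by rw [hic]; exact fun hx => hdc (Option.some_injective _ hx).symm), hdM]
        by_cases hec : e = c
        · subst hec
          have := hsub i h e hic
          omega
        · have h1 := huniq e hec hed
          have h2 := hle i h e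
          omega
      have hle1 : votes Q c ≤ votes P d := by
        show Q.count (some c) ≤ P.count (some d)
        rw [count_key, count_key]
        exact count_le_count' (some c) (some d) Q P (by rw [hQlen])
          (fun i h₁ h₂ hQi => hsubc i h₂ ((hQget i h₁).symm.trans hQi) d hdc hdM)
      have hle2 : votes P c ≤ votes Q d := by
        show P.count (some c) ≤ Q.count (some d)
        rw [count_key, count_key]
        exact count_le_count' (some c) (some d) P Q hQlen.symm
          (fun i h₁ h₂ hPi => by rw [hQget i h₂]; exact hstep i h₁ hPi)
      have hfin := hc d hdc
      omega
end

section
/- Let f be a social choice function for m ≥ 2 candidates satisfying anonymity (A), neutrality (N), the duel property (DP) and reducibility to subsocieties (RS). Let n ≥ 2 and suppose f(Q) = Maj(Q) for every profile Q of length n−1. If P is a profile of length n admitting a dominating tie, i.e., there exist distinct candidates i, j such that Σ_i(P) = Σ_j(P) > Σ_k(P) for every candidate k ∉ {i, j}, then f(P) = none. -/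
lemma count_deq {m : ℕ} (a : Option (Fin m)) (l : Profile m) :
    @List.count _ instBEqOfDecidableEq a l = l.count a := by
  apply List.countP_congr
  intro b _
  simp

lemma perm_of_count_eq {m : ℕ} {l₁ l₂ : Profile m}
    (h : ∀ a, l₁.count a = l₂.count a) : l₁.Perm l₂ := by
  refine List.perm_iff_count.2 fun a => ?_
  exact h a

lemma count_eq_of_perm {m : ℕ} {l₁ l₂ : Profile m} (h : l₁.Perm l₂) (c : Option (Fin m)) :
    l₁.count c = l₂.count c := by
  exact h.count_eq c

lemma perm_getElem_cons_eraseIdx {α : Type*} (l : List α) (idx : ℕ) (h : idx < l.length) :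
    l.Perm (l[idx] :: l.eraseIdx idx) := by
  conv_lhs => rw [← List.take_append_drop idx l, ← List.getElem_cons_drop h]
  rw [List.eraseIdx_eq_take_drop_succ]
  exact List.perm_middle

lemma profile_count_eraseIdx {m : ℕ} (l : Profile m) (idx : ℕ) (h : idx < l.length)
    (c : Option (Fin m)) :
    (l.eraseIdx idx).count c = l.count c - (if l[idx] = c then 1 else 0) := by
  have hp := count_eq_of_perm (perm_getElem_cons_eraseIdx l idx h) c
  by_cases hc : l[idx] = c
  · subst hc
    have hpos : 1 ≤ l.count l[idx] := List.count_pos_iff.2 (List.getElem_mem h)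
    rw [List.count_cons_self] at hp
    rw [if_pos rfl]
    omega
  · rw [List.count_cons_of_ne hc] at hp
    rw [if_neg hc]
    omega

lemma maj_eq_some {m : ℕ} (Q : Profile m) (k : Fin m)
    (h : ∀ l : Fin m, l ≠ k → votes Q l < votes Q k) : Maj Q = some k := by
  have hex : ∃ k : Fin m, ∀ l : Fin m, l ≠ k → votes Q l < votes Q k := ⟨k, h⟩
  rw [Maj, dif_pos hex]
  congr 1
  by_contra hne
  exact absurd (h _ hne) (not_lt.2 (le_of_lt (hex.choose_spec k (Ne.symm hne))))

lemma maj_eq_none {m : ℕ} (Q : Profile m)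
    (h : ¬ ∃ k : Fin m, ∀ l : Fin m, l ≠ k → votes Q l < votes Q k) : Maj Q = none := by
  rw [Maj, dif_neg h]

/-- dominating tie case: under (A), (N), (DP), (RS) and the inductive
hypothesis that `f` agrees with `Maj` on all profiles of length `n - 1`, any profile
of length `n` with a dominating tie results in a tie. -/
theorem stmt_6 (m : ℕ) (hm : 2 ≤ m) (f : Profile m → Option (Fin m))
    (hA : Anonymous f) (hN : Neutral f) (hDP : DuelProperty f) (hRS : Reducible f)
    (n : ℕ) (hn : 2 ≤ n)
    (hInd : ∀ Q : Profile m, Q.length = n - 1 → f Q = Maj Q)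
    (P : Profile m) (hP : P.length = n)
    (i j : Fin m) (hij : i ≠ j)
    (htie : votes P i = votes P j)
    (hdom : ∀ k : Fin m, k ≠ i → k ≠ j → votes P k < votes P i) :
    f P = none := by
  classical
  have hji : j ≠ i := Ne.symm hij
  have hsij : (some i : Option (Fin m)) ≠ some j := fun h => hij (Option.some_injective _ h)
  have hsji : (some j : Option (Fin m)) ≠ some i := fun h => hji (Option.some_injective _ h)
  set h0 : Option (Fin m) → Option (Fin m) :=
    fun b => if b = some i then some j else if b = some j then some i else none with hh0
  have h0none : h0 none = none := by simp [hh0]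
  have h0i : h0 (some i) = some j := by simp [hh0]
  have h0j : h0 (some j) = some i := by simp [hh0, hsji]
  have h0other : ∀ b : Fin m, b ≠ i → b ≠ j → h0 (some b) = none := by
    intro b hbi hbj
    simp [hh0, hbi, hbj]
  have hlen2 : 2 ≤ P.length := by rw [hP]; exact hn
  have key := hRS P hlen2
  -- Step 2: compute f on each erased profile
  have hstep2 : ∀ l : Fin P.length, f (P.eraseIdx (l : ℕ)) = h0 P[(l : ℕ)] := by
    intro l
    have hl : (l : ℕ) < P.length := l.isLt
    have hlen : (P.eraseIdx (l : ℕ)).length = n - 1 := by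
      have := List.length_eraseIdx_add_one hl
      omega
    rw [hInd _ hlen]
    have hcount : ∀ c : Fin m,
        votes (P.eraseIdx (l : ℕ)) c = votes P c - (if P[(l : ℕ)] = some c then 1 else 0) :=
      fun c => profile_count_eraseIdx P (l : ℕ) hl (some c)
    have hles : ∀ c : Fin m, votes (P.eraseIdx (l : ℕ)) c ≤ votes P c := by
      intro c; rw [hcount]; omega
    rcases hb : P[(l : ℕ)] with _ | b
    · rw [h0none]
      apply maj_eq_none
      rintro ⟨k, hk⟩
      have hvi : votes (P.eraseIdx (l : ℕ)) i = votes P i := by rw [hcount, hb]; simp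
      have hvj : votes (P.eraseIdx (l : ℕ)) j = votes P j := by rw [hcount, hb]; simp
      by_cases hki : k = i
      · subst hki
        have hlt := hk j hji
        rw [hvi, hvj, ← htie] at hlt
        omega
      by_cases hkj : k = j
      · subst hkj
        have hlt := hk i hij
        rw [hvi, hvj, ← htie] at hlt
        omega
      · have h1 := hk i (fun h => hki h.symm)
        have h2 := hles k
        have h3 := hdom k hki hkj
        rw [hvi] at h1
        omega
    · have hmem : (some b : Option (Fin m)) ∈ P := hb ▸ List.getElem_mem hl
      by_cases hbi : b = i
      · subst hbi
        rw [h0i]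
        apply maj_eq_some
        intro c hc
        have hvj : votes (P.eraseIdx (l : ℕ)) j = votes P j := by
          rw [hcount, hb]; simp [hsij]
        have hs1 : 1 ≤ votes P b := List.count_pos_iff.2 hmem
        rw [hvj]
        by_cases hci : c = b
        · subst hci
          rw [hcount, hb, if_pos rfl, ← htie]
          omega
        · have h1 := hles c
          have h2 := hdom c hci hc
          omega
      · by_cases hbj : b = j
        · subst hbj
          rw [h0j]
          apply maj_eq_some
          intro c hc
          have hvi : votes (P.eraseIdx (l : ℕ)) i = votes P i := by
            rw [hcount, hb]; simp [hsji]
          have hs1 : 1 ≤ votes P b := List.count_pos_iff.2 hmem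
          rw [hvi]
          by_cases hcj : c = b
          · subst hcj
            rw [hcount, hb, if_pos rfl, htie]
            omega
          · have h1 := hles c
            have h2 := hdom c hc hcj
            omega
        · have hsbi : (some b : Option (Fin m)) ≠ some i :=
            fun h => hbi (Option.some_injective _ h)
          have hsbj : (some b : Option (Fin m)) ≠ some j :=
            fun h => hbj (Option.some_injective _ h)
          rw [h0other b hbi hbj]
          apply maj_eq_none
          rintro ⟨k, hk⟩
          have hvi : votes (P.eraseIdx (l : ℕ)) i = votes P i := by
            rw [hcount, hb]; simp [hsbi]
          have hvj : votes (P.eraseIdx (l : ℕ)) j = votes P j := by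
            rw [hcount, hb]; simp [hsbj]
          by_cases hki : k = i
          · subst hki
            have hlt := hk j hji
            rw [hvi, hvj, ← htie] at hlt
            omega
          by_cases hkj : k = j
          · subst hkj
            have hlt := hk i hij
            rw [hvi, hvj, ← htie] at hlt
            omega
          · have h1 := hk i (fun h => hki h.symm)
            have h2 := hles k
            have h3 := hdom k hki hkj
            rw [hvi] at h1
            omega
  -- Step 3: the reduced profile is P.map h0
  have hQeq : (List.ofFn fun l : Fin P.length => f (P.eraseIdx (l : ℕ))) = P.map h0 := by
    conv_rhs => rw [← List.ofFn_get P]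
    rw [List.map_ofFn]
    exact congrArg List.ofFn (funext fun l => hstep2 l)
  rw [hQeq] at key
  set Q : Profile m := P.map h0 with hQdef
  -- counts in Q
  have hcQ : ∀ c : Option (Fin m), Q.count c = P.countP (fun b => h0 b == c) := by
    intro c
    rw [hQdef, List.count_eq_countP, List.countP_map]
    rfl
  have hQi : Q.count (some i) = votes P j := by
    rw [hcQ]
    show _ = List.count (some j) P
    rw [List.count_eq_countP]
    apply List.countP_congr
    intro b _
    simp only [beq_iff_eq]
    constructor
    · intro hbc
      by_cases h1 : b = some i
      · rw [h1, h0i] at hbc; exact absurd hbc hsji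
      by_cases h2 : b = some j
      · exact h2
      · exfalso
        rcases b with _ | x
        · rw [h0none] at hbc; exact nomatch hbc
        · rw [h0other x (fun h => h1 (by rw [h])) (fun h => h2 (by rw [h]))] at hbc
          exact nomatch hbc
    · intro hbc; rw [hbc, h0j]
  have hQj : Q.count (some j) = votes P i := by
    rw [hcQ]
    show _ = List.count (some i) P
    rw [List.count_eq_countP]
    apply List.countP_congr
    intro b _
    simp only [beq_iff_eq]
    constructor
    · intro hbc
      by_cases h1 : b = some i
      · exact h1
      by_cases h2 : b = some j
      · rw [h2, h0j] at hbc; exact absurd hbc hsij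
      · exfalso
        rcases b with _ | x
        · rw [h0none] at hbc; exact nomatch hbc
        · rw [h0other x (fun h => h1 (by rw [h])) (fun h => h2 (by rw [h]))] at hbc
          exact nomatch hbc
    · intro hbc; rw [hbc, h0i]
  -- ballots of Q are none, some i or some j
  have hmem2 : ∀ b ∈ Q, b = none ∨ b = some i ∨ b = some j := by
    intro b hb
    rw [hQdef, List.mem_map] at hb
    obtain ⟨a, _, rfl⟩ := hb
    rcases a with _ | x
    · left; exact h0none
    · by_cases hxi : x = i
      · right; right; rw [hxi]; exact h0i
      by_cases hxj : x = j
      · right; left; rw [hxj]; exact h0j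
      · left; exact h0other x hxi hxj
  -- swapping i and j permutes Q
  have hgg : ∀ b : Option (Fin m),
      Option.map (⇑(Equiv.swap i j)) (Option.map (⇑(Equiv.swap i j)) b) = b := by
    intro b
    rcases b with _ | x
    · rfl
    · simp [Equiv.swap_apply_self]
  have hτ : ∀ c : Option (Fin m), Q.count (Option.map (⇑(Equiv.swap i j)) c) = Q.count c := by
    intro c
    rcases c with _ | x
    · rfl
    · simp only [Option.map_some]
      by_cases hxi : x = i
      · subst hxi
        rw [Equiv.swap_apply_left, hQj, hQi, htie]
      by_cases hxj : x = j
      · subst hxj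
        rw [Equiv.swap_apply_right, hQi, hQj, htie]
      · rw [Equiv.swap_apply_of_ne_of_ne hxi hxj]
  have hperm : (Q.map (Option.map (⇑(Equiv.swap i j)))).Perm Q := by
    apply perm_of_count_eq
    intro c
    calc (Q.map (Option.map (⇑(Equiv.swap i j)))).count c
        = Q.countP (fun b => Option.map (⇑(Equiv.swap i j)) b == c) := by
          rw [List.count_eq_countP, List.countP_map]
          rfl
      _ = Q.count (Option.map (⇑(Equiv.swap i j)) c) := by
          rw [List.count_eq_countP]
          apply List.countP_congr
          intro b _
          simp only [beq_iff_eq]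
          constructor
          · intro h; rw [← h]; exact (hgg b).symm
          · intro h; rw [h]; exact hgg c
      _ = Q.count c := hτ c
  have hfix : f Q = Option.map (⇑(Equiv.swap i j)) (f Q) := by
    rw [← hN (Equiv.swap i j) Q]
    exact (hA _ _ hperm).symm
  rw [key]
  rcases hDP i j Q hmem2 with h | h | h
  · exact h
  · rw [h, Option.map_some, Equiv.swap_apply_left] at hfix
    exact absurd (Option.some_injective _ hfix) hij
  · rw [h, Option.map_some, Equiv.swap_apply_right] at hfix
    exact absurd (Option.some_injective _ hfix) hji
end

section
/- Let f be a social choice function for m ≥ 2 candidates satisfying Pareto optimality (PO) and reducibility to subsocieties (RS). Let n ≥ 2 and suppose f(Q) = Maj(Q) for every profile Q of length n−1. If P is a profile of length n with a clear leader, i.e., there exists a candidate k* such that Σ_{k*}(P) > Σ_k(P) for every candidate k ≠ k*, then f(P) = some k*. -/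
lemma votes_eraseIdx {m : ℕ} (P : Profile m) (i : ℕ) (hi : i < P.length) (l : Fin m) :
    votes P l = (if P[i] = some l then 1 else 0) + votes (P.eraseIdx i) l := by
  have hperm : P.Perm (P[i] :: P.eraseIdx i) :=
    (List.perm_cons_erase (P.getElem_mem hi)).trans (.cons _ (List.erase_getElem hi))
  unfold votes
  rw [List.count_eq_countP, List.count_eq_countP, hperm.countP_eq, List.countP_cons]
  by_cases h : P[i] = some l <;> simp [h, Nat.add_comm]

lemma maj_eq {m : ℕ} (P : Profile m) (k : Fin m)
    (h : ∀ l : Fin m, l ≠ k → votes P l < votes P k) : Maj P = some k := by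
  unfold Maj
  rw [dif_pos ⟨k, h⟩]
  have hc := (Exists.choose_spec (⟨k, h⟩ : ∃ k : Fin m, ∀ l : Fin m, l ≠ k → votes P l < votes P k))
  by_contra hne
  have hne' : Exists.choose _ ≠ k := fun e => hne (by rw [e])
  exact absurd (h _ hne') (by have := hc k (Ne.symm hne'); omega)

/-- clear leader case: under (PO), (RS) and the inductive hypothesis
that `f` agrees with `Maj` on all profiles of length `n - 1`, any profile of length
`n` with a clear leader `k*` elects `k*`. -/
theorem stmt_7 (m : ℕ) (hm : 2 ≤ m) (f : Profile m → Option (Fin m))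
    (hPO : ParetoOptimal f) (hRS : Reducible f)
    (n : ℕ) (hn : 2 ≤ n)
    (hInd : ∀ Q : Profile m, Q.length = n - 1 → f Q = Maj Q)
    (P : Profile m) (hP : P.length = n)
    (k : Fin m) (hlead : ∀ l : Fin m, l ≠ k → votes P l < votes P k) :
    f P = some k := by
  have hlen : 2 ≤ P.length := hP ▸ hn
  rw [hRS P hlen]
  set g : Fin P.length → Option (Fin m) := fun l => f (P.eraseIdx (l : ℕ)) with hg
  have hMaj : ∀ l : Fin P.length, g l = Maj (P.eraseIdx (l : ℕ)) := by
    intro l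
    apply hInd
    have := List.length_eraseIdx_add_one l.isLt
    omega
  -- Claim A: removing a non-k ballot keeps k the strict leader
  have claimA : ∀ l : Fin P.length, P[(l : ℕ)] ≠ some k → g l = some k := by
    intro l hne
    rw [hMaj l]
    apply maj_eq
    intro j hj
    have h1 := votes_eraseIdx P l l.isLt j
    have h2 := votes_eraseIdx P l l.isLt k
    have h3 := hlead j hj
    rw [if_neg hne] at h2
    by_cases hP1 : P[(l : ℕ)] = some j <;> simp [hP1] at h1 <;> omega
  -- Claim B: every component is none or some k
  have claimB : ∀ l : Fin P.length, g l = none ∨ g l = some k := by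
    intro l
    by_cases hne : P[(l : ℕ)] = some k
    · rw [hMaj l]
      unfold Maj
      split
      · next h =>
        right
        have hc := h.choose_spec
        congr 1
        by_contra hjk
        have h1 := votes_eraseIdx P l l.isLt h.choose
        have h2 := votes_eraseIdx P l l.isLt k
        have h3 := hlead h.choose hjk
        have h4 := hc k (fun e => hjk e.symm)
        rw [if_pos hne] at h2
        by_cases hP1 : P[(l : ℕ)] = some h.choose <;> simp [hP1] at h1 <;> omega
      · exact Or.inl rfl
    · exact Or.inr (claimA l hne)
  apply hPO
  · -- votes (ofFn g) k > 0 : some component equals some k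
    have : some k ∈ List.ofFn g := by
      rw [List.mem_ofFn]
      by_cases hall : ∀ (i : ℕ) (hi : i < P.length), P[i] = some k
      · -- all ballots are some k
        refine ⟨⟨0, by omega⟩, ?_⟩
        rw [hMaj]
        show Maj (P.eraseIdx 0) = some k
        apply maj_eq
        intro j hj
        have h2 := votes_eraseIdx P 0 (by omega) k
        have hz : votes (P.eraseIdx 0) j = 0 := by
          have : votes P j = 0 := by
            unfold votes
            rw [List.count_eq_zero]
            intro hmem
            obtain ⟨i, hi, he⟩ := List.getElem_of_mem hmem
            exact hj (Option.some_injective _ ((hall i hi).symm.trans he)).symm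
          have h1 := votes_eraseIdx P 0 (by omega) j
          omega
        have hk : 2 ≤ votes P k := by
          unfold votes
          calc 2 ≤ P.length := hlen
          _ = P.count (some k) := (List.count_eq_length.mpr (by
              intro b hb
              obtain ⟨i, hi, he⟩ := List.getElem_of_mem hb
              rw [← he, hall i hi])).symm
        rw [if_pos (hall 0 (by omega))] at h2
        omega
      · push_neg at hall
        obtain ⟨i, hi, hne⟩ := hall
        exact ⟨⟨i, hi⟩, claimA ⟨i, hi⟩ hne⟩
    unfold votes
    exact List.count_pos_iff.mpr this
  · intro j hj
    unfold votes
    rw [List.count_eq_zero]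
    intro hmem
    rw [List.mem_ofFn] at hmem
    obtain ⟨l, hl⟩ := hmem
    rcases claimB l with h | h <;> rw [h] at hl
    · exact absurd hl (Option.some_ne_none j).symm
    · exact hj (Option.some_injective _ hl.symm)
end

section
/- For m ≥ 2, the social choice function f1 defined by f1(P) = none if all ballots of P are abstentions, and f1(P) = some k* where k* is the smallest candidate index with Σ_{k*}(P) > 0 otherwise, satisfies anonymity (A), the duel property (DP), Pareto optimality (PO) and reducibility to subsocieties (RS), but does not satisfy neutrality (N). -/
/-- The rule `f1`: `none` if all ballots are abstentions, and otherwise the smallest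
candidate index receiving at least one vote. -/
noncomputable def f1 {m : ℕ} (P : Profile m) : Option (Fin m) :=
  if h : ∃ k : Fin m, 0 < votes P k
  then some ((Finset.univ.filter fun k : Fin m => 0 < votes P k).min'
      ⟨h.choose, Finset.mem_filter.mpr ⟨Finset.mem_univ _, h.choose_spec⟩⟩)
  else none

lemma f1_eq_none {m : ℕ} {P : Profile m} (h : ∀ k, votes P k = 0) : f1 P = none := by
  rw [f1, dif_neg]
  push_neg
  intro k
  simp [h k]

lemma f1_eq_some {m : ℕ} {P : Profile m} {k : Fin m} (hk : 0 < votes P k)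
    (hmin : ∀ j, 0 < votes P j → k ≤ j) : f1 P = some k := by
  have hex : ∃ k : Fin m, 0 < votes P k := ⟨k, hk⟩
  rw [f1, dif_pos hex]
  congr 1
  apply le_antisymm
  · exact Finset.min'_le (Finset.univ.filter fun k : Fin m => 0 < votes P k) k
      (Finset.mem_filter.mpr ⟨Finset.mem_univ _, hk⟩)
  · have := Finset.min'_mem (Finset.univ.filter fun k : Fin m => 0 < votes P k)
      ⟨hex.choose, Finset.mem_filter.mpr ⟨Finset.mem_univ _, hex.choose_spec⟩⟩
    exact hmin _ (Finset.mem_filter.mp this).2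

lemma f1_spec_some {m : ℕ} {P : Profile m} {k : Fin m} (h : f1 P = some k) :
    0 < votes P k ∧ ∀ j, 0 < votes P j → k ≤ j := by
  rw [f1] at h
  split_ifs at h with hex
  · have hk := Option.some_injective _ h
    have hmem := Finset.min'_mem (Finset.univ.filter fun k : Fin m => 0 < votes P k)
      ⟨hex.choose, Finset.mem_filter.mpr ⟨Finset.mem_univ _, hex.choose_spec⟩⟩
    rw [hk] at hmem
    refine ⟨(Finset.mem_filter.mp hmem).2, fun j hj => ?_⟩
    rw [← hk]
    exact Finset.min'_le (Finset.univ.filter fun k : Fin m => 0 < votes P k) j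
      (Finset.mem_filter.mpr ⟨Finset.mem_univ _, hj⟩)

lemma votes_eraseIdx_le {m : ℕ} (P : Profile m) (l : ℕ) (k : Fin m) :
    votes (P.eraseIdx l) k ≤ votes P k :=
  (List.eraseIdx_sublist P l).count_le _

lemma count_eraseIdx'_s8 {α : Type*} [DecidableEq α] {l : List α} {i : ℕ} (hi : i < l.length)
    (x : α) : l.count x = (l.eraseIdx i).count x + if l[i] = x then 1 else 0 := by
  have h1 := (List.perm_cons_erase (l.getElem_mem hi)).count_eq x
  have h2 := (List.erase_getElem hi).count_eq x
  rw [List.count_cons] at h1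
  simp only [beq_iff_eq] at h1
  omega

/-- `f1` satisfies (A), (DP), (PO) and (RS), but not (N). -/
theorem stmt_8 (m : ℕ) (hm : 2 ≤ m) :
    Anonymous (f1 (m := m)) ∧ DuelProperty (f1 (m := m)) ∧
    ParetoOptimal (f1 (m := m)) ∧ Reducible (f1 (m := m)) ∧
    ¬ Neutral (f1 (m := m)) := by
  refine ⟨?_, ?_, ?_, ?_, ?_⟩
  · -- Anonymous
    intro P P' hp
    have hv : votes P = votes P' := funext fun k => by unfold votes List.count; exact hp.countP_eq _
    unfold f1
    simp only [hv]
  · -- DuelProperty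
    intro i j P hb
    rcases hf : f1 P with _ | k
    · exact Or.inl rfl
    · have hk := (f1_spec_some hf).1
      have hmem : some k ∈ P := List.count_pos_iff.mp hk
      rcases hb _ hmem with h | h | h
      · simp at h
      · exact Or.inr (Or.inl (by rw [Option.some_inj.mp h]))
      · exact Or.inr (Or.inr (by rw [Option.some_inj.mp h]))
  · -- ParetoOptimal
    intro P k hk hl
    refine f1_eq_some hk fun j hj => ?_
    by_cases hjk : j = k
    · exact le_of_eq hjk.symm
    · exact absurd (hl j hjk) (by omega)
  · -- Reducible
    intro P hP
    by_cases hex : ∃ k : Fin m, 0 < votes P k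
    · obtain ⟨k, hfP⟩ : ∃ k, f1 P = some k := by rw [f1, dif_pos hex]; exact ⟨_, rfl⟩
      obtain ⟨hk, hmin⟩ := f1_spec_some hfP
      rw [hfP]
      symm
      -- find an index l such that f1 (P.eraseIdx l) = some k
      obtain ⟨i0, hi0, hPi0⟩ := List.getElem_of_mem (List.count_pos_iff.mp hk)
      set l : ℕ := if i0 = 0 then 1 else 0 with hl
      have hll : l < P.length := by rw [hl]; split <;> omega
      have hlne : l ≠ i0 := by split_ifs at hl <;> omega
      have hmemer : some k ∈ P.eraseIdx l :=
        List.mem_eraseIdx_iff_getElem.mpr ⟨i0, hi0, fun h => hlne h.symm, hPi0⟩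
      have hsub : ∀ (l' : ℕ) (j : Fin m), 0 < votes (P.eraseIdx l') j → k ≤ j :=
        fun l' j hj => hmin j (lt_of_lt_of_le hj (votes_eraseIdx_le P l' j))
      have hfer : f1 (P.eraseIdx l) = some k :=
        f1_eq_some (List.count_pos_iff.mpr hmemer) (hsub l)
      refine f1_eq_some ?_ ?_
      · refine List.count_pos_iff.mpr ?_
        rw [List.mem_ofFn]
        exact ⟨⟨l, hll⟩, hfer⟩
      · intro j hj
        have := List.count_pos_iff.mp hj
        rw [List.mem_ofFn] at this
        obtain ⟨l', hl'⟩ := this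
        have hl'' : f1 (P.eraseIdx (l' : ℕ)) = some j := hl'
        exact hsub l' j (f1_spec_some hl'').1
    · push_neg at hex
      have hz : ∀ k, votes P k = 0 := fun k => Nat.le_zero.mp (hex k)
      have her : ∀ (l : ℕ), f1 (P.eraseIdx l) = none := fun l =>
        f1_eq_none fun k => Nat.le_zero.mp ((votes_eraseIdx_le P l k).trans (hz k).le)
      rw [f1_eq_none hz, f1_eq_none]
      intro k
      refine List.count_eq_zero.mpr ?_
      rw [List.mem_ofFn]
      rintro ⟨l, hl⟩
      have hl2 : f1 (P.eraseIdx (l : ℕ)) = some k := hl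
      rw [her l] at hl2
      cases hl2
  · -- not Neutral
    intro hN
    have h01 : (0 : ℕ) < m := by omega
    have h11 : (1 : ℕ) < m := by omega
    set a : Fin m := ⟨0, h01⟩
    set b : Fin m := ⟨1, h11⟩
    have hab : a ≠ b := by simp [a, b, Fin.ext_iff]
    set τ : Equiv.Perm (Fin m) := Equiv.swap a b
    set P : Profile m := [some a, some b] with hPdef
    have hfP : f1 P = some a := by
      refine f1_eq_some ?_ ?_
      · simp [votes, hPdef]
      · intro j _; exact Fin.mk_le_of_le_val (Nat.zero_le _)
    have hmap : P.map (Option.map τ) = [some b, some a] := by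
      simp [hPdef, τ, Equiv.swap_apply_left, Equiv.swap_apply_right]
    have hfP' : f1 (P.map (Option.map τ)) = some a := by
      rw [hmap]
      refine f1_eq_some ?_ ?_
      · simp [votes, List.count_cons, hab]
      · intro j _; exact Fin.mk_le_of_le_val (Nat.zero_le _)
    have := hN τ P
    rw [hfP, hfP'] at this
    simp only [Option.map_some] at this
    have : a = τ a := Option.some_inj.mp this
    rw [Equiv.swap_apply_left] at this
    exact hab this
end

section
/- For m ≥ 2, the unanimity consent rule UC, defined by UC(P) = some k if Σ_k(P) > 0 and Σ_l(P) = 0 for every candidate l ≠ k, and UC(P) = none otherwise, satisfies anonymity (A), neutrality (N), the duel property (DP) and Pareto optimality (PO), but does not satisfy reducibility to subsocieties (RS). -/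
/-- The unanimity consent rule `UC`: `some k` if `k` gets at least one vote and no
other candidate gets any vote, and `none` otherwise. -/
noncomputable def UC {m : ℕ} (P : Profile m) : Option (Fin m) :=
  if h : ∃ k : Fin m, 0 < votes P k ∧ ∀ l : Fin m, l ≠ k → votes P l = 0
  then some h.choose else none


lemma UC_eq_some {m : ℕ} {P : Profile m} {k : Fin m} :
    UC P = some k ↔ (0 < votes P k ∧ ∀ l : Fin m, l ≠ k → votes P l = 0) := by
  unfold UC
  split
  · next h =>
    obtain ⟨hc1, hc2⟩ := h.choose_spec
    constructor
    · intro hc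
      rw [Option.some.injEq] at hc
      subst hc; exact ⟨hc1, hc2⟩
    · rintro ⟨hk1, hk2⟩
      rw [Option.some.injEq]
      by_contra hne
      rw [hk2 _ hne] at hc1
      exact absurd hc1 (lt_irrefl 0)
  · next h =>
    constructor
    · intro hc; exact nomatch hc
    · rintro ⟨hk1, hk2⟩; exact absurd ⟨k, hk1, hk2⟩ h

lemma UC_eq_none {m : ℕ} {P : Profile m} :
    UC P = none ↔ ¬ ∃ k : Fin m, 0 < votes P k ∧ ∀ l : Fin m, l ≠ k → votes P l = 0 := by
  unfold UC
  split
  · next h => simp [h]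
  · next h => simp [h]

lemma count_beq_eq {m : ℕ} (P : Profile m) (x : Option (Fin m)) :
    @List.count _ Option.instBEq x P = @List.count _ instBEqOfDecidableEq x P := by
  simp only [List.count]
  refine List.countP_congr (fun b _ => ?_)
  cases @beq_iff_eq _ Option.instBEq _ b x |>.symm <;>
    cases @beq_iff_eq _ instBEqOfDecidableEq _ b x |>.symm <;> simp [beq_iff_eq]

lemma votes_perm {m : ℕ} {P P' : Profile m} (h : P.Perm P') (k : Fin m) :
    votes P k = votes P' k := by
  unfold votes; simp only [List.count]; exact h.countP_eq _

lemma votes_map {m : ℕ} (τ : Equiv.Perm (Fin m)) (P : Profile m) (k : Fin m) :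
    votes (P.map (Option.map τ)) k = votes P (τ.symm k) := by
  have hinj : Function.Injective (Option.map (τ : Fin m → Fin m)) :=
    Option.map_injective τ.injective
  have := List.count_map_of_injective (x := some (τ.symm k)) P _ hinj
  simp only [Option.map_some, Equiv.apply_symm_apply] at this
  unfold votes
  rw [count_beq_eq, count_beq_eq]
  rw [count_beq_eq, count_beq_eq] at this
  exact this

/-- the unanimity consent rule `UC` satisfies (A), (N), (DP) and (PO),
but not (RS). -/
theorem stmt_10 (m : ℕ) (hm : 2 ≤ m) :
    Anonymous (UC (m := m)) ∧ Neutral (UC (m := m)) ∧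
    DuelProperty (UC (m := m)) ∧ ParetoOptimal (UC (m := m)) ∧
    ¬ Reducible (UC (m := m)) := by
  refine ⟨?_, ?_, ?_, ?_, ?_⟩
  · -- Anonymous
    intro P P' hperm
    rcases h : UC P' with _ | k
    · rw [UC_eq_none] at h ⊢
      intro ⟨k, hk1, hk2⟩
      exact h ⟨k, by rwa [← votes_perm hperm], fun l hl => by rw [← votes_perm hperm]; exact hk2 l hl⟩
    · rw [UC_eq_some] at h ⊢
      exact ⟨by rw [votes_perm hperm]; exact h.1, fun l hl => by rw [votes_perm hperm]; exact h.2 l hl⟩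
  · -- Neutral
    intro τ P
    rcases h : UC P with _ | k
    · rw [UC_eq_none] at h
      simp only [Option.map_none]
      rw [UC_eq_none]
      rintro ⟨k, hk1, hk2⟩
      refine h ⟨τ.symm k, by rwa [← votes_map], fun l hl => ?_⟩
      have : τ l ≠ k := fun hc => hl (by simp [← hc])
      have := hk2 (τ l) this
      rwa [votes_map, Equiv.symm_apply_apply] at this
    · rw [UC_eq_some] at h
      simp only [Option.map_some]
      rw [UC_eq_some]
      refine ⟨by rw [votes_map, Equiv.symm_apply_apply]; exact h.1, fun l hl => ?_⟩
      rw [votes_map]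
      exact h.2 _ (fun hc => hl (by rw [← hc, Equiv.apply_symm_apply]))
  · -- DuelProperty
    intro i j P hP
    rcases h : UC P with _ | k
    · exact Or.inl rfl
    · rw [UC_eq_some] at h
      have hmem : some k ∈ P := List.count_pos_iff.mp h.1
      rcases hP _ hmem with hc | hc | hc
      · exact nomatch hc
      · exact Or.inr (Or.inl (by rw [Option.some.injEq] at hc; rw [hc]))
      · exact Or.inr (Or.inr (by rw [Option.some.injEq] at hc; rw [hc]))
  · -- ParetoOptimal
    intro P k h1 h2
    exact UC_eq_some.mpr ⟨h1, h2⟩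
  · -- not Reducible
    intro hRS
    have h01 : (⟨0, by omega⟩ : Fin m) ≠ ⟨1, by omega⟩ := by simp
    set a : Fin m := ⟨0, by omega⟩
    set b : Fin m := ⟨1, by omega⟩
    set P : Profile m := [some a, some a, some b] with hP
    have hva : votes P a = 2 := by simp [votes, hP, List.count_cons, h01.symm]
    have hvb : votes P b = 1 := by simp [votes, hP, List.count_cons, h01, h01.symm]
    have hUCP : UC P = none := by
      rw [UC_eq_none]
      rintro ⟨k, hk1, hk2⟩
      by_cases hka : k = a
      · subst hka
        have := hk2 b h01.symm
        omega
      · have := hk2 a (Ne.symm hka)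
        omega
    have hUCab : UC [some a, some b] = none := by
      rw [UC_eq_none]
      rintro ⟨k, hk1, hk2⟩
      have hva' : votes [some a, some b] a = 1 := by simp [votes, List.count_cons, h01.symm]
      have hvb' : votes [some a, some b] b = 1 := by simp [votes, List.count_cons, h01]
      by_cases hka : k = a
      · subst hka; have := hk2 b h01.symm; omega
      · have := hk2 a (Ne.symm hka); omega
    have hUCaa : UC [some a, some a] = some a := by
      rw [UC_eq_some]
      refine ⟨by simp [votes, List.count_cons], fun l hl => ?_⟩
      simp [votes, List.count_cons, hl, Ne.symm hl]
    have hlen : P.length = 3 := rfl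
    have := hRS P (by rw [hlen]; omega)
    rw [hUCP] at this
    have herase : (List.ofFn fun l : Fin P.length => UC (P.eraseIdx (l : ℕ)))
        = [none, none, some a] := by
      rw [hlen] at *
      simp only [List.ofFn_succ, List.ofFn_zero]
      norm_num [hP, List.eraseIdx, hUCab, hUCaa]
    rw [herase] at this
    have h2 : UC [none, none, some a] = some a := by
      rw [UC_eq_some]
      refine ⟨by simp [votes, List.count_cons], fun l hl => ?_⟩
      simp [votes, List.count_cons, hl, Ne.symm hl]
    rw [h2] at this
    exact nomatch this
end

section
/- For m ≥ 2, the axioms of neutrality (N), Pareto optimality (PO) and reducibility to subsocieties (RS) are independent: there exist anonymous social choice functions f1, f2, f3 for m candidates such that f1 satisfies (A), (DP), (PO) and (RS) but not (N); f2 satisfies (A), (N), (DP) and (RS) but not (PO); and f3 satisfies (A), (N), (DP) and (PO) but not (RS). -/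
namespace SCF
variable {m : ℕ}

def supp (P : Profile m) : Finset (Fin m) := Finset.univ.filter (fun k => some k ∈ P)

lemma mem_supp {P : Profile m} {k : Fin m} : k ∈ supp P ↔ some k ∈ P := by
  simp [supp]

lemma votes_pos_iff {P : Profile m} {k : Fin m} : 0 < votes P k ↔ some k ∈ P := by
  simp [votes, List.count_pos_iff]

lemma supp_perm {P P' : Profile m} (h : P.Perm P') : supp P = supp P' := by
  ext k; simp [mem_supp, h.mem_iff]

lemma supp_map (τ : Equiv.Perm (Fin m)) (P : Profile m) :
    supp (P.map (Option.map τ)) = (supp P).image τ := by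
  ext k
  simp only [mem_supp, List.mem_map, Finset.mem_image, Option.map_eq_some_iff]
  constructor
  · rintro ⟨b, hb, a, rfl, rfl⟩
    exact ⟨a, mem_supp.1 (mem_supp.2 hb), rfl⟩
  · rintro ⟨a, ha, rfl⟩
    exact ⟨some a, ha, a, rfl, rfl⟩

lemma supp_eraseIdx_subset (P : Profile m) (l : ℕ) : supp (P.eraseIdx l) ⊆ supp P := by
  intro k hk
  exact mem_supp.2 ((P.eraseIdx_sublist l).subset (mem_supp.1 hk))

/-- supp of a profile where every vote is for one candidate `k`. -/
lemma supp_eq_singleton {P : Profile m} {k : Fin m} (h1 : 0 < votes P k)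
    (h2 : ∀ l : Fin m, l ≠ k → votes P l = 0) : supp P = {k} := by
  ext l
  simp only [mem_supp, Finset.mem_singleton]
  constructor
  · intro hl
    by_contra hlk
    have := h2 l hlk
    rw [← votes_pos_iff] at hl
    omega
  · rintro rfl
    exact votes_pos_iff.1 h1

noncomputable def f1 (P : Profile m) : Option (Fin m) :=
  if h : (supp P).Nonempty then some ((supp P).min' h) else none

noncomputable def f3 (P : Profile m) : Option (Fin m) :=
  if h : ∃ k, supp P = {k} then some h.choose else none

lemma f1_eq_none {P : Profile m} : f1 P = none ↔ supp P = ∅ := by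
  rw [f1]
  split_ifs with h
  · simp [Finset.nonempty_iff_ne_empty.1 h]
  · simpa using Finset.not_nonempty_iff_eq_empty.1 h

lemma f1_eq_some {P : Profile m} {k : Fin m} :
    f1 P = some k ↔ k ∈ supp P ∧ ∀ l ∈ supp P, k ≤ l := by
  rw [f1]
  split_ifs with h
  · simp only [Option.some_inj]
    constructor
    · rintro rfl
      exact ⟨Finset.min'_mem _ _, fun l hl => Finset.min'_le _ _ hl⟩
    · rintro ⟨hk, hle⟩
      exact le_antisymm (Finset.min'_le _ _ hk) (Finset.le_min' _ _ _ hle)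
  · simp only [reduceCtorEq, false_iff, not_and]
    intro hk
    exact absurd ⟨k, hk⟩ h

lemma f3_eq_some {P : Profile m} {k : Fin m} : f3 P = some k ↔ supp P = {k} := by
  rw [f3]
  split_ifs with h
  · simp only [Option.some_inj]
    constructor
    · rintro rfl; exact h.choose_spec
    · intro hk
      exact Finset.singleton_injective (h.choose_spec.symm.trans hk)
  · simp only [reduceCtorEq, false_iff]
    exact fun hk => h ⟨k, hk⟩

lemma f3_eq_none {P : Profile m} : f3 P = none ↔ ¬ ∃ k, supp P = {k} := by
  rw [f3]; split_ifs with h <;> simp [h]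

lemma f1_anonymous : Anonymous (f1 (m := m)) := by
  intro P P' h; simp [f1, supp_perm h]

lemma f3_anonymous : Anonymous (f3 (m := m)) := by
  intro P P' h; simp [f3, supp_perm h]

lemma f1_duel : DuelProperty (f1 (m := m)) := by
  intro i j P hb
  rcases h : f1 P with _ | k
  · exact Or.inl rfl
  · have hk : some k ∈ P := mem_supp.1 (f1_eq_some.1 h).1
    rcases hb _ hk with h' | h' | h' <;> simp_all

lemma f3_duel : DuelProperty (f3 (m := m)) := by
  intro i j P hb
  rcases h : f3 P with _ | k
  · exact Or.inl rfl
  · have hk : some k ∈ P := mem_supp.1 (by rw [f3_eq_some.1 h]; simp)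
    rcases hb _ hk with h' | h' | h' <;> simp_all

lemma f1_pareto : ParetoOptimal (f1 (m := m)) := by
  intro P k h1 h2
  rw [f1_eq_some, supp_eq_singleton h1 h2]
  simp

lemma f3_pareto : ParetoOptimal (f3 (m := m)) := by
  intro P k h1 h2
  exact f3_eq_some.2 (supp_eq_singleton h1 h2)

lemma f3_neutral : Neutral (f3 (m := m)) := by
  intro τ P
  by_cases h : ∃ k, supp P = {k}
  · obtain ⟨k, hk⟩ := h
    have h1 : f3 P = some k := f3_eq_some.2 hk
    have h2 : f3 (P.map (Option.map τ)) = some (τ k) := by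
      rw [f3_eq_some, supp_map, hk, Finset.image_singleton]
    rw [h1, h2]; rfl
  · have h1 : f3 P = none := f3_eq_none.2 h
    have h2 : f3 (P.map (Option.map τ)) = none := by
      rw [f3_eq_none, supp_map]
      rintro ⟨k, hk⟩
      apply h
      refine ⟨τ.symm k, ?_⟩
      have := congrArg (Finset.image (τ.symm : Fin m → Fin m)) hk
      simpa [Finset.image_image, Function.comp] using this
    rw [h1, h2]; rfl

lemma f1_reducible : Reducible (f1 (m := m)) := by
  intro P hP
  by_cases hs : (supp P).Nonempty
  · set k := (supp P).min' hs with hkdef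
    have hfP : f1 P = some k :=
      f1_eq_some.2 ⟨Finset.min'_mem _ _, fun l hl => Finset.min'_le _ _ hl⟩
    rw [hfP]
    have hA : ∀ (l : ℕ) (k' : Fin m), f1 (P.eraseIdx l) = some k' → k ≤ k' := by
      intro l k' h
      exact Finset.min'_le _ _ (supp_eraseIdx_subset P l (f1_eq_some.1 h).1)
    have hB : ∃ l : Fin P.length, f1 (P.eraseIdx (l : ℕ)) = some k := by
      have hkP : some k ∈ P := mem_supp.1 (Finset.min'_mem _ hs)
      by_cases hall : ∀ b ∈ P, b = some k
      · refine ⟨⟨0, by omega⟩, ?_⟩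
        have htl : P.tail.length = P.length - 1 := List.length_tail
        have hne : 0 < P.tail.length := by omega
        obtain ⟨b, hb⟩ := List.exists_mem_of_length_pos hne
        have hbP : b ∈ P := (List.tail_sublist P).subset hb
        have hbk : b = some k := hall b hbP
        have hmem : some k ∈ P.eraseIdx 0 := by
          rw [List.eraseIdx_zero]
          exact hbk ▸ hb
        rw [f1_eq_some]
        exact ⟨mem_supp.2 hmem,
          fun l hl => Finset.min'_le _ _ (supp_eraseIdx_subset _ 0 hl)⟩
      · push_neg at hall
        obtain ⟨b, hbP, hbk⟩ := hall
        obtain ⟨l, hl, hget⟩ := List.mem_iff_getElem.1 hbP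
        refine ⟨⟨l, hl⟩, ?_⟩
        have hmem : some k ∈ P.eraseIdx l := by
          obtain ⟨i, hi, hgi⟩ := List.mem_iff_getElem.1 hkP
          rw [List.mem_eraseIdx_iff_getElem]
          refine ⟨i, hi, ?_, hgi⟩
          rintro rfl
          exact hbk (hget ▸ hgi ▸ rfl)
        rw [f1_eq_some]
        exact ⟨mem_supp.2 hmem,
          fun l' hl' => Finset.min'_le _ _ (supp_eraseIdx_subset _ l hl')⟩
    symm
    rw [f1_eq_some]
    constructor
    · rw [mem_supp, List.mem_ofFn]
      obtain ⟨l, hl⟩ := hB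
      exact ⟨l, hl⟩
    · intro l' hl'
      rw [mem_supp, List.mem_ofFn] at hl'
      obtain ⟨i, hi⟩ := hl'
      exact hA _ _ hi
  · have h0 : f1 P = none := f1_eq_none.2 (Finset.not_nonempty_iff_eq_empty.1 hs)
    rw [h0]
    symm
    rw [f1_eq_none]
    ext k
    simp only [mem_supp, List.mem_ofFn, Finset.notMem_empty, iff_false, Set.mem_range,
      not_exists]
    intro l h
    have hk : k ∈ supp (P.eraseIdx (l : ℕ)) := (f1_eq_some.1 h).1
    have := supp_eraseIdx_subset P l hk
    rw [Finset.not_nonempty_iff_eq_empty.1 hs] at this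
    simp at this

lemma f2_reducible : Reducible (fun _ : Profile m => (none : Option (Fin m))) :=
  fun _ _ => rfl

end SCF

/-- for `m ≥ 2`, the axioms (N), (PO) and (RS) are independent. -/
theorem stmt_11 (m : ℕ) (hm : 2 ≤ m) :
    ∃ f₁ f₂ f₃ : Profile m → Option (Fin m),
      (Anonymous f₁ ∧ DuelProperty f₁ ∧ ParetoOptimal f₁ ∧ Reducible f₁ ∧ ¬ Neutral f₁) ∧
      (Anonymous f₂ ∧ Neutral f₂ ∧ DuelProperty f₂ ∧ Reducible f₂ ∧ ¬ ParetoOptimal f₂) ∧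
      (Anonymous f₃ ∧ Neutral f₃ ∧ DuelProperty f₃ ∧ ParetoOptimal f₃ ∧ ¬ Reducible f₃) := by
  classical
  set i : Fin m := ⟨0, by omega⟩ with hi
  set j : Fin m := ⟨1, by omega⟩ with hj
  have hij : i ≠ j := by simp [hi, hj, Fin.ext_iff]
  have hile : ∀ l : Fin m, i ≤ l := fun l => by simp [hi, Fin.le_def]
  refine ⟨SCF.f1, fun _ => none, SCF.f3, ⟨SCF.f1_anonymous, SCF.f1_duel, SCF.f1_pareto,
    SCF.f1_reducible, ?_⟩, ⟨fun _ _ _ => rfl, fun _ _ => rfl, fun _ _ _ _ => Or.inl rfl,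
    SCF.f2_reducible, ?_⟩, ⟨SCF.f3_anonymous, SCF.f3_neutral, SCF.f3_duel, SCF.f3_pareto, ?_⟩⟩
  · -- f1 not neutral
    intro hN
    have hsupp : ∀ a b : Fin m, SCF.supp [some a, some b] = {a, b} := by
      intro a b; ext k; simp [SCF.mem_supp]
    have h1 : SCF.f1 [some i, some j] = some i := by
      rw [SCF.f1_eq_some, hsupp]
      exact ⟨by simp, fun l _ => hile l⟩
    have h2 := hN (Equiv.swap i j) [some i, some j]
    rw [h1] at h2
    simp only [List.map_cons, List.map_nil, Option.map_some] at h2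
    rw [Equiv.swap_apply_left, Equiv.swap_apply_right] at h2
    have h3 : SCF.f1 [some j, some i] = some i := by
      rw [SCF.f1_eq_some, hsupp]
      exact ⟨by simp, fun l _ => hile l⟩
    rw [h3] at h2
    exact hij (Option.some_inj.1 h2)
  · -- f2 not pareto
    intro hPO
    have := hPO [some i] i (by simp [votes]) (by
      intro l hl
      simp [votes, List.count_cons, Ne.symm hl])
    simp at this
  · -- f3 not reducible
    intro hRS
    set P : Profile m := [some i, some i, some j] with hP
    have hlen : P.length = 3 := rfl
    have hsuppP : SCF.supp P = {i, j} := by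
      ext k; simp [SCF.mem_supp, hP]
    have hPnone : SCF.f3 P = none := by
      rw [SCF.f3_eq_none]
      rintro ⟨k, hk⟩
      rw [hsuppP] at hk
      have h1 : i ∈ ({k} : Finset (Fin m)) := hk ▸ (by simp)
      have h2 : j ∈ ({k} : Finset (Fin m)) := hk ▸ (by simp)
      simp only [Finset.mem_singleton] at h1 h2
      exact hij (h1.trans h2.symm)
    have hij' : SCF.f3 [some i, some j] = none := by
      rw [SCF.f3_eq_none]
      rintro ⟨k, hk⟩
      have hs : SCF.supp [some i, some j] = {i, j} := by
        ext k'; simp [SCF.mem_supp]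
      rw [hs] at hk
      have h1 : i ∈ ({k} : Finset (Fin m)) := hk ▸ (by simp)
      have h2 : j ∈ ({k} : Finset (Fin m)) := hk ▸ (by simp)
      simp only [Finset.mem_singleton] at h1 h2
      exact hij (h1.trans h2.symm)
    have hii : SCF.f3 [some i, some i] = some i := by
      rw [SCF.f3_eq_some]
      ext k; simp [SCF.mem_supp]
    have := hRS P (by rw [hlen]; omega)
    rw [hPnone] at this
    have hofn : (List.ofFn fun l : Fin P.length => SCF.f3 (P.eraseIdx (l : ℕ)))
        = [SCF.f3 [some i, some j], SCF.f3 [some i, some j], SCF.f3 [some i, some i]] := by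
      simp [hP, List.ofFn_succ, List.eraseIdx]
    rw [hofn, hij', hii] at this
    have hfin : SCF.f3 [none, none, some i] = some i := by
      rw [SCF.f3_eq_some]
      ext k; simp [SCF.mem_supp]
    rw [hfin] at this
    cases this
end
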